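/- Let L_k be the Markov chain on the nonnegative integers with transitions L_{k+1} = L_k + 1 with probability 1−q and L_{k+1} = max(L_k − 2, 0) with probability q (a reflecting random walk that increments by 1 or decrements by 2). If q > 1/3, then setting r = (−1 + √(1 + 4(1−q)/q))/2, one has 0 < r < 1, and the geometric distribution π_k = (1−r)·r^k for k ≥ 0 is a stationary distribution of the chain. -/

import Mathlib

/-- Transition kernel of the reflecting random walk on ℕ: from state `k` move to `k+1`
with probability `1-q` and to `max(k-2,0)` (here ℕ-subtraction `k-2`) with probability `q`. -/
noncomputable def walkP (q : ℝ) (k j : ℕ) : ℝ :=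
  (if j = k + 1 then 1 - q else 0) + (if j = k - 2 then q else 0)

/-- If `q > 1/3` (and `q < 1`), then `r = (−1 + √(1 + 4(1−q)/q))/2`
satisfies `0 < r < 1`, and the geometric distribution `π_k = (1−r)·r^k` is a stationary
distribution of the reflecting random walk. -/
theorem walk_stationary (q : ℝ) (h3 : 1 / 3 < q) (h1 : q < 1) :
    let r := (-1 + Real.sqrt (1 + 4 * (1 - q) / q)) / 2
    0 < r ∧ r < 1 ∧
      ∀ j : ℕ, (1 - r) * r ^ j = ∑' k : ℕ, (1 - r) * r ^ k * walkP q k j := by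
  intro r
  have hrdef : r = (-1 + Real.sqrt (1 + 4 * (1 - q) / q)) / 2 := rfl
  have hq0 : (0:ℝ) < q := by linarith
  have hd0 : (0:ℝ) < (1 - q) / q := div_pos (by linarith) hq0
  have heqd : 1 + 4 * (1 - q) / q = 1 + 4 * ((1 - q) / q) := by ring
  have hx : (0:ℝ) ≤ 1 + 4 * (1 - q) / q := by rw [heqd]; linarith
  set t := Real.sqrt (1 + 4 * (1 - q) / q) with ht
  have hsq : t ^ 2 = 1 + 4 * (1 - q) / q := Real.sq_sqrt hx
  have htnn : 0 ≤ t := Real.sqrt_nonneg _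
  have hgt : 1 < 1 + 4 * (1 - q) / q := by rw [heqd]; linarith
  have hlt9 : 1 + 4 * (1 - q) / q < 9 := by
    have h2 : (1 - q) / q < 2 := (div_lt_iff₀ hq0).mpr (by linarith)
    rw [heqd]; linarith
  have ht1 : 1 < t := by nlinarith [hsq]
  have ht3 : t < 3 := by nlinarith [hsq]
  have hr0 : 0 < r := by rw [hrdef]; linarith
  have hr1 : r < 1 := by rw [hrdef]; linarith
  have hs' : q * t ^ 2 = q + 4 * (1 - q) := by rw [hsq]; field_simp
  have hkey : q * r ^ 2 + q * r = 1 - q := by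
    rw [hrdef]; linear_combination (1/4 : ℝ) * hs'
  have hcube : r = (1 - q) + q * r ^ 3 := by linear_combination (1 - r) * hkey
  refine ⟨hr0, hr1, ?_⟩
  intro j
  cases j with
  | zero =>
    rw [tsum_eq_sum (s := ({0, 1, 2} : Finset ℕ)) (by
      intro k hk
      simp only [Finset.mem_insert, Finset.mem_singleton] at hk
      have h1' : ¬ (0 = k + 1) := by omega
      have h2' : ¬ (0 = k - 2) := by omega
      simp [walkP, h1', h2'])]
    have e0 : walkP q 0 0 = q := by norm_num [walkP]
    have e1 : walkP q 1 0 = q := by norm_num [walkP]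
    have e2 : walkP q 2 0 = q := by norm_num [walkP]
    rw [show ({0, 1, 2} : Finset ℕ) = {0} ∪ {1} ∪ {2} by decide]
    rw [Finset.sum_union (by decide), Finset.sum_union (by decide)]
    simp only [Finset.sum_singleton, e0, e1, e2]
    linear_combination (r - 1) * hkey
  | succ n =>
    rw [tsum_eq_sum (s := ({n, n + 3} : Finset ℕ)) (by
      intro k hk
      simp only [Finset.mem_insert, Finset.mem_singleton] at hk
      push_neg at hk
      have h1' : ¬ (n + 1 = k + 1) := by omega
      have h2' : ¬ (n + 1 = k - 2) := by omega
      simp [walkP, h1', h2', hk.1.symm])]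
    rw [Finset.sum_pair (by omega : n ≠ n + 3)]
    have e1 : walkP q n (n + 1) = 1 - q := by
      have hne : ¬ (n + 1 = n - 2) := by omega
      simp [walkP, hne]
    have e2 : walkP q (n + 3) (n + 1) = q := by
      have h1' : ¬ (n + 1 = n + 3 + 1) := by omega
      have h2' : n + 1 = n + 3 - 2 := by omega
      rw [walkP, if_neg h1', if_pos h2', zero_add]
    rw [e1, e2]
    linear_combination (1 - r) * r ^ n * hcube
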